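/- Let k ∈ ℂ, θ₁ ∈ ℂ, and α₁, α₂ ∈ ℂ. Set y = (exp(conj(θ₁)), exp(−conj(θ₁)))ᵀ and ỹ = (conj(α₁)·exp(conj(θ₁)), conj(α₂)·exp(−conj(θ₁)))ᵀ in ℂ², and put r₁ = −Re(θ₁) and ρ = α₂ − α₁. Then the quantity Δ⁺ built from (k, y, ỹ) satisfies Δ⁺ = 4(k²−conj(k)²)²·(1 − kρ)·(1 + conj(k)·conj(ρ)) + 16|k|²·(k·e^{−2r₁} + conj(k)·e^{2r₁})² (the evaluation of Δ⁺ on the one-pole second-order soliton data). -/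
import Mathlib


open Matrix Complex ComplexConjugate

noncomputable section

abbrev M2 := Matrix (Fin 2) (Fin 2) ℂ
abbrev Vec2 := Matrix (Fin 2) (Fin 1) ℂ

def sigma3 : M2 := !![1, 0; 0, -1]
def sigma2 : M2 := !![0, -Complex.I; Complex.I, 0]

/-- ⟨u|M|v⟩ = u†Mv -/
def qform (u : Vec2) (M : M2) (v : Vec2) : ℂ := (uᴴ * M * v) 0 0

def a11 (k : ℂ) (y : Vec2) (ε : ℂ) : ℂ :=
  k * qform y (1 + ε • sigma3) y + conj k * qform y (1 - ε • sigma3) y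

def a12 (k : ℂ) (y yt : Vec2) (ε : ℂ) : ℂ :=
  k * qform y (1 + ε • sigma3) yt + conj k * qform y (1 - ε • sigma3) yt

def a21 (k : ℂ) (y yt : Vec2) (ε : ℂ) : ℂ :=
  k * qform yt (1 + ε • sigma3) y + conj k * qform yt (1 - ε • sigma3) y

def a22 (k : ℂ) (yt : Vec2) (ε : ℂ) : ℂ :=
  k * qform yt (1 + ε • sigma3) yt + conj k * qform yt (1 - ε • sigma3) yt

def b11 (k : ℂ) (y : Vec2) (ε : ℂ) : ℂ :=
  (k ^ 2 + (conj k) ^ 2) * qform y (1 + ε • sigma3) y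
    + 2 * k * conj k * qform y (1 - ε • sigma3) y

def b12 (k : ℂ) (y yt : Vec2) (ε : ℂ) : ℂ :=
  (k ^ 2 + (conj k) ^ 2) * qform y (1 + ε • sigma3) yt
    + 2 * k * conj k * qform y (1 - ε • sigma3) yt

def b21 (k : ℂ) (y yt : Vec2) (ε : ℂ) : ℂ :=
  (k ^ 2 + (conj k) ^ 2) * qform yt (1 + ε • sigma3) y
    + 2 * k * conj k * qform yt (1 - ε • sigma3) y

def c11 (k : ℂ) (y : Vec2) (ε : ℂ) : ℂ :=
  (k ^ 3 + 3 * k * (conj k) ^ 2) * qform y (1 + ε • sigma3) y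
    + ((conj k) ^ 3 + 3 * conj k * k ^ 2) * qform y (1 - ε • sigma3) y

def Δf (k : ℂ) (y yt : Vec2) (ε : ℂ) : ℂ :=
  (k ^ 2 - (conj k) ^ 2) ^ 2
      * (a21 k y yt ε * a12 k y yt ε - a11 k y ε * a22 k yt ε)
    + 2 * a11 k y ε * c11 k y (-ε) - b11 k y ε * b11 k y (-ε)
    + (k ^ 2 - (conj k) ^ 2)
      * (a21 k y yt ε * b11 k y (-ε) - a12 k y yt ε * b11 k y ε
          + a11 k y ε * (b12 k y yt ε - b21 k y yt (-ε)))

/-- P_ε = (I+εσ₃)/2 -/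
def Pe (ε : ℂ) : M2 := (1 / 2 : ℂ) • (1 + ε • sigma3)

lemma qform_plus1 (a b c d : ℂ) :
    qform !![a; b] (1 + (1:ℂ) • sigma3) !![c; d] = 2 * conj a * c := by
  simp only [qform, sigma3, Matrix.mul_apply, Fin.sum_univ_two, Matrix.conjTranspose_apply,
    Matrix.add_apply, Matrix.smul_apply, Matrix.one_apply, Matrix.of_apply, Matrix.cons_val',
    Matrix.cons_val_zero, Matrix.cons_val_one, Matrix.head_cons, Matrix.head_fin_const,
    Matrix.cons_val_fin_one, smul_eq_mul, Fin.isValue, star_def, if_true,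
    Fin.zero_eq_one_iff, Fin.one_eq_zero_iff, Nat.succ_ne_self, OfNat.ofNat_ne_one,
    if_false, ite_false, ite_true, reduceIte]
  ring

lemma qform_minus1 (a b c d : ℂ) :
    qform !![a; b] (1 - (1:ℂ) • sigma3) !![c; d] = 2 * conj b * d := by
  simp only [qform, sigma3, Matrix.mul_apply, Fin.sum_univ_two, Matrix.conjTranspose_apply,
    Matrix.sub_apply, Matrix.smul_apply, Matrix.one_apply, Matrix.of_apply, Matrix.cons_val',
    Matrix.cons_val_zero, Matrix.cons_val_one, Matrix.head_cons, Matrix.head_fin_const,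
    Matrix.cons_val_fin_one, smul_eq_mul, Fin.isValue, star_def, if_true,
    Fin.zero_eq_one_iff, Fin.one_eq_zero_iff, Nat.succ_ne_self, OfNat.ofNat_ne_one,
    if_false, ite_false, ite_true, reduceIte]
  ring

lemma qform_plus_neg1 (a b c d : ℂ) :
    qform !![a; b] (1 + (-1:ℂ) • sigma3) !![c; d] = 2 * conj b * d := by
  have h : (1 + (-1:ℂ) • sigma3) = (1 - (1:ℂ) • sigma3) := by
    simp [sub_eq_add_neg, neg_smul]
  rw [h, qform_minus1]

lemma qform_minus_neg1 (a b c d : ℂ) :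
    qform !![a; b] (1 - (-1:ℂ) • sigma3) !![c; d] = 2 * conj a * c := by
  have h : (1 - (-1:ℂ) • sigma3) = (1 + (1:ℂ) • sigma3) := by
    simp [sub_eq_add_neg, neg_smul]
  rw [h, qform_plus1]

set_option maxHeartbeats 2000000 in
/-- Evaluation of Δ⁺ on the one-pole second-order soliton data. -/
theorem Delta_plus_soliton (k θ₁ α₁ α₂ : ℂ)
    (y yt : Vec2)
    (hy : y = !![Complex.exp (conj θ₁); Complex.exp (-(conj θ₁))])
    (hyt : yt = !![conj α₁ * Complex.exp (conj θ₁); conj α₂ * Complex.exp (-(conj θ₁))])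
    (r₁ : ℝ) (hr : r₁ = -θ₁.re) (ρ : ℂ) (hρ : ρ = α₂ - α₁) :
    Δf k y yt 1
      = 4 * (k ^ 2 - (conj k) ^ 2) ^ 2 * (1 - k * ρ) * (1 + conj k * conj ρ)
        + 16 * (Complex.normSq k : ℂ) *
            (k * Complex.exp (-(2 * (r₁ : ℂ))) + conj k * Complex.exp (2 * (r₁ : ℂ))) ^ 2 := by
  subst hy hyt hr hρ
  have e1 : Complex.exp (-(2 * ((-θ₁.re : ℝ) : ℂ)))
      = conj (Complex.exp (conj θ₁)) * Complex.exp (conj θ₁) := by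
    rw [← Complex.exp_conj, Complex.conj_conj, ← Complex.exp_add]
    congr 1
    rw [Complex.add_conj]
    push_cast
    ring
  have e2 : Complex.exp (2 * ((-θ₁.re : ℝ) : ℂ))
      = conj (Complex.exp (-(conj θ₁))) * Complex.exp (-(conj θ₁)) := by
    rw [← Complex.exp_conj, ← Complex.exp_add]
    congr 1
    rw [map_neg, Complex.conj_conj]
    have h := Complex.add_conj θ₁
    push_cast at h ⊢
    linear_combination h
  have hns : (Complex.normSq k : ℂ) = k * conj k := (Complex.mul_conj k).symm
  simp only [Δf, a11, a12, a21, a22, b11, b12, b21, c11]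
  rw [e1, e2, hns]
  simp only [qform_plus1, qform_minus1, qform_plus_neg1, qform_minus_neg1]
  rw [Complex.exp_neg (conj θ₁)]
  have hA : Complex.exp (conj θ₁) ≠ 0 := Complex.exp_ne_zero _
  have hA' : conj (Complex.exp (conj θ₁)) ≠ 0 := by
    rw [← Complex.exp_conj]; exact Complex.exp_ne_zero _
  simp only [_root_.map_mul, map_inv₀, _root_.map_sub, Complex.conj_conj]
  field_simp
  ring
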